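/- Suppose T has at least two elements and the beliefs Π satisfy convex dependence. Then optimal full extraction fails: there exists a value function v : T → ℝ such that no menu c : T → ℝ^S achieves optimal full extraction for (Π, v). -/
import Mathlib


noncomputable section

/-- Euclidean inner product on ℝ^S. -/
def dotp {S : Type*} [Fintype S] (x y : S → ℝ) : ℝ := ∑ s, x s * y s

/-- The contract `c t` is mixed-strategy optimal for type `t` in the menu `c`. -/
def MixedOptimal {S T : Type*} [Fintype S] [Fintype T]
    (P : T → Set (S → ℝ)) (c : T → (S → ℝ)) (t : T) : Prop :=
  ∀ σ ∈ stdSimplex ℝ T, ∀ π ∈ P t, dotp π (c t) ≤ ∑ s, σ s * dotp π (c s)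

/-- A menu `c` achieves optimal full extraction for beliefs `P` and values `v`. -/
def OptimalFullExtraction {S T : Type*} [Fintype S] [Fintype T]
    (P : T → Set (S → ℝ)) (v : T → ℝ) (c : T → (S → ℝ)) : Prop :=
  ∀ t : T, MixedOptimal P c t ∧ (∀ π ∈ P t, dotp π (c t) ≤ v t) ∧
    (∃ π ∈ P t, dotp π (c t) = v t)

theorem stmt_5 {S T : Type*} [Fintype S] [Fintype T] [Nonempty S] [Nontrivial T]
    (P : T → Set (S → ℝ))
    (hne : ∀ t, (P t).Nonempty) (hcl : ∀ t, IsClosed (P t))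
    (hcv : ∀ t, Convex ℝ (P t)) (hsub : ∀ t, P t ⊆ stdSimplex ℝ S)
    (hcd : ∃ t : T, closure (convexHull ℝ (⋃ s ∈ {s : T | s ≠ t}, P s)) ⊆ P t) :
    ∃ v : T → ℝ, ∀ c : T → (S → ℝ), ¬ OptimalFullExtraction P v c := by
  classical
  obtain ⟨t₀, ht₀⟩ := hcd
  -- P s ⊆ P t₀ for s ≠ t₀
  have hsubP : ∀ s : T, s ≠ t₀ → P s ⊆ P t₀ := by
    intro s hs
    refine fun π hπ => ht₀ (subset_closure (subset_convexHull ℝ _ ?_))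
    exact Set.mem_biUnion hs hπ
  refine ⟨fun t => if t = t₀ then 0 else 1, fun c hofe => ?_⟩
  obtain ⟨s, hs⟩ := exists_ne t₀
  obtain ⟨hmo, hle, π, hπ, heq⟩ := hofe s
  have hone : dotp π (c s) = 1 := by simpa [hs] using heq
  -- Dirac σ at t₀
  have hσ : (fun u : T => if u = t₀ then (1:ℝ) else 0) ∈ stdSimplex ℝ T := by
    constructor
    · intro u; dsimp only; split <;> norm_num
    · simp
  have h1 := hmo _ hσ π hπ
  have hsum : ∑ u, (if u = t₀ then (1:ℝ) else 0) * dotp π (c u) = dotp π (c t₀) := by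
    rw [Finset.sum_eq_single t₀]
    · simp
    · intro b _ hb; simp [hb]
    · simp
  rw [hsum, hone] at h1
  have h2 := (hofe t₀).2.1 π (hsubP s hs hπ)
  norm_num at h2
  linarith
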